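/- Let N be a positive integer, A an N×N real skew-symmetric matrix, b ∈ ℝ^N and ε ∈ ℝ. For x ∈ ℝ^N set d_i(x,ε) = 1 − ε b_i − ε Σ_j a_{ij} x_j, let M(x,ε) be the N×N matrix with diagonal entries M_{ii} = d_i(x,ε) and off-diagonal entries M_{ij} = −ε x_i a_{ij} (i ≠ j), and on the set where M(x,ε) is invertible define f(x) = M(x,ε)⁻¹ (𝟙 + ε·diag(b)) x. Then for every x with all coordinates x_i ≠ 0, all d_i(x,ε) ≠ 0 and M(x,ε), M(f(x),ε) invertible and all coordinates f_i(x) ≠ 0, f is differentiable at x and det(Df(x)) = (f₁(x)·f₂(x)⋯f_N(x)) / (x₁·x₂⋯x_N); equivalently, the volume form dx₁∧…∧dx_N/(x₁x₂⋯x_N) is invariant under f. -/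

import Mathlib

open Matrix

/-- `dᵢ(x,ε) = 1 - ε bᵢ - ε ∑ⱼ aᵢⱼ xⱼ`. -/
noncomputable def lvD (N : ℕ) (A : Matrix (Fin N) (Fin N) ℝ) (b : Fin N → ℝ)
    (ε : ℝ) (x : Fin N → ℝ) (i : Fin N) : ℝ :=
  1 - ε * b i - ε * ∑ j, A i j * x j

/-- The matrix `M(x,ε)` of the Kahan discretization of the Lotka–Volterra type
system: diagonal entries `dᵢ(x,ε)`, off-diagonal entries `-ε xᵢ aᵢⱼ`. -/
noncomputable def lvM (N : ℕ) (A : Matrix (Fin N) (Fin N) ℝ) (b : Fin N → ℝ)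
    (ε : ℝ) (x : Fin N → ℝ) : Matrix (Fin N) (Fin N) ℝ :=
  Matrix.of fun i j => if i = j then lvD N A b ε x i else -(ε * x i * A i j)

/-- The Kahan map `f(x) = M(x,ε)⁻¹ (𝟙 + ε·diag(b)) x`. -/
noncomputable def lvF (N : ℕ) (A : Matrix (Fin N) (Fin N) ℝ) (b : Fin N → ℝ)
    (ε : ℝ) (x : Fin N → ℝ) : Fin N → ℝ :=
  (lvM N A b ε x)⁻¹ *ᵥ ((1 + ε • Matrix.diagonal b) *ᵥ x)

attribute [local instance] Matrix.linftyOpNormedAddCommGroup Matrix.linftyOpNormedRing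
  Matrix.linftyOpNormedAlgebra

/-- linear part of `x ↦ lvM x` -/
noncomputable def lvL (N : ℕ) (A : Matrix (Fin N) (Fin N) ℝ) (ε : ℝ) :
    (Fin N → ℝ) →ₗ[ℝ] Matrix (Fin N) (Fin N) ℝ where
  toFun v := Matrix.of fun i j =>
    if i = j then -(ε * ∑ k, A i k * v k) else -(ε * v i * A i j)
  map_add' u v := by
    ext i j
    simp only [Matrix.of_apply, Matrix.add_apply, Pi.add_apply]
    split_ifs with h
    · have h1 : (∑ k, A i k * (u k + v k))
          = (∑ k, A i k * u k) + ∑ k, A i k * v k := by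
        rw [← Finset.sum_add_distrib]; exact Finset.sum_congr rfl fun k _ => by ring
      rw [h1]; ring
    · ring
  map_smul' c v := by
    ext i j
    simp only [Matrix.of_apply, Matrix.smul_apply, Pi.smul_apply, RingHom.id_apply,
      smul_eq_mul]
    split_ifs with h
    · have h1 : (∑ k, A i k * (c * v k)) = c * ∑ k, A i k * v k := by
        rw [Finset.mul_sum]; exact Finset.sum_congr rfl fun k _ => by ring
      rw [h1]; ring
    · ring

lemma lvM_decomp (N : ℕ) (A : Matrix (Fin N) (Fin N) ℝ) (b : Fin N → ℝ) (ε : ℝ)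
    (y : Fin N → ℝ) : lvM N A b ε y = lvM N A b ε 0 + lvL N A ε y := by
  ext i j
  simp only [lvM, lvD, lvL, Matrix.of_apply, Matrix.add_apply, LinearMap.coe_mk,
    AddHom.coe_mk, Pi.zero_apply, mul_zero, Finset.sum_const_zero]
  split_ifs with h <;> ring

private lemma sum_split {N : ℕ} (i : Fin N) (c : ℝ) (h g : Fin N → ℝ) :
    ∑ j, ((if i = j then c else 0) + h j) * g j = c * g i + ∑ j, h j * g j := by
  simp [add_mul, Finset.sum_add_distrib, ite_mul, Finset.sum_ite_eq]

private lemma sum_pull {N : ℕ} (c : ℝ) (a g : Fin N → ℝ) :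
    ∑ j, -(c * a j) * g j = -(c * ∑ j, a j * g j) := by
  rw [Finset.mul_sum, ← Finset.sum_neg_distrib]
  exact Finset.sum_congr rfl fun j _ => by ring

lemma lvM_mulVec (N : ℕ) (A : Matrix (Fin N) (Fin N) ℝ) (b : Fin N → ℝ) (ε : ℝ)
    (hAii : ∀ i, A i i = 0) (y v : Fin N → ℝ) (i : Fin N) :
    (lvM N A b ε y *ᵥ v) i = lvD N A b ε y i * v i - ε * y i * ∑ j, A i j * v j := by
  have hsplit : ∀ j, lvM N A b ε y i j
      = (if i = j then lvD N A b ε y i else 0) + -(ε * y i * A i j) := by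
    intro j
    by_cases h : i = j
    · subst h; simp [lvM, hAii]
    · simp [lvM, h]
  have : (lvM N A b ε y *ᵥ v) i = ∑ j, lvM N A b ε y i j * v j := by
    simp [Matrix.mulVec, dotProduct]
  rw [this, Finset.sum_congr rfl fun j _ => by rw [hsplit j], sum_split,
    sum_pull (ε * y i) (fun j => A i j) v]
  ring

lemma lvL_mulVec (N : ℕ) (A : Matrix (Fin N) (Fin N) ℝ) (ε : ℝ)
    (hAii : ∀ i, A i i = 0) (v g : Fin N → ℝ) (i : Fin N) :
    (lvL N A ε v *ᵥ g) i
      = -(ε * ∑ k, A i k * v k) * g i - ε * v i * ∑ j, A i j * g j := by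
  have hsplit : ∀ j, lvL N A ε v i j
      = (if i = j then -(ε * ∑ k, A i k * v k) else 0) + -(ε * v i * A i j) := by
    intro j
    by_cases h : i = j
    · subst h; simp [lvL, hAii]
    · simp [lvL, h]
  have : (lvL N A ε v *ᵥ g) i = ∑ j, lvL N A ε v i j * g j := by
    simp [Matrix.mulVec, dotProduct]
  rw [this, Finset.sum_congr rfl fun j _ => by rw [hsplit j], sum_split,
    sum_pull (ε * v i) (fun j => A i j) g]
  ring

lemma cVec_apply (N : ℕ) (b : Fin N → ℝ) (ε : ℝ) (v : Fin N → ℝ) (i : Fin N) :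
    ((1 + ε • Matrix.diagonal b) *ᵥ v) i = v i + ε * (b i * v i) := by
  simp [Matrix.add_mulVec, Matrix.one_mulVec, Matrix.smul_mulVec,
    Matrix.mulVec_diagonal]

noncomputable def mulVecL (N : ℕ) :
    Matrix (Fin N) (Fin N) ℝ →L[ℝ] (Fin N → ℝ) →L[ℝ] (Fin N → ℝ) :=
  LinearMap.mkContinuous₂
    { toFun := fun M => Matrix.mulVecLin M
      map_add' := fun M M' => Matrix.mulVecLin_add M M'
      map_smul' := fun c M => by ext v i; simp [Matrix.smul_mulVec] } 1
    (fun M v => by simpa using Matrix.linfty_opNorm_mulVec M v)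

@[simp] lemma mulVecL_apply (N : ℕ) (M : Matrix (Fin N) (Fin N) ℝ) (v : Fin N → ℝ) :
    mulVecL N M v = M *ᵥ v := rfl

theorem lotkaVolterra_kahan_invariant_measure (N : ℕ) (hN : 0 < N)
    (A : Matrix (Fin N) (Fin N) ℝ) (hA : Aᵀ = -A) (b : Fin N → ℝ) (ε : ℝ)
    (x : Fin N → ℝ)
    (hx : ∀ i, x i ≠ 0)
    (hd : ∀ i, lvD N A b ε x i ≠ 0)
    (hM : IsUnit (lvM N A b ε x))
    (hM' : IsUnit (lvM N A b ε (lvF N A b ε x)))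
    (hfx : ∀ i, lvF N A b ε x i ≠ 0) :
    DifferentiableAt ℝ (lvF N A b ε) x ∧
      (fderiv ℝ (lvF N A b ε) x).det
        = (∏ i, lvF N A b ε x i) / (∏ i, x i) := by
  classical
  set fx := lvF N A b ε x with hfxdef
  have hAij : ∀ i j, A j i = -A i j := by
    intro i j
    have := congrFun (congrFun hA i) j
    simpa [Matrix.transpose_apply] using this
  have hAii : ∀ i, A i i = 0 := by
    intro i
    have := hAij i i
    linarith
  have hdet : IsUnit (lvM N A b ε x).det := (Matrix.isUnit_iff_isUnit_det _).mp hM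
  have hMf : lvM N A b ε x *ᵥ fx = (1 + ε • Matrix.diagonal b) *ᵥ x := by
    rw [hfxdef, lvF, Matrix.mulVec_mulVec, Matrix.mul_nonsing_inv _ hdet,
      Matrix.one_mulVec]
  -- componentwise consequence
  have hMfi : ∀ i, lvD N A b ε x i * fx i = lvD N A b (-ε) fx i * x i := by
    intro i
    have h1 := congrFun hMf i
    rw [lvM_mulVec N A b ε hAii x fx i, cVec_apply] at h1
    simp only [lvD, neg_mul, neg_neg, sub_neg_eq_add]
    simp only [lvD] at h1
    nlinarith [h1]
  -- the matrix identity
  have hmat : lvM N A b ε x * Matrix.diagonal fx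
      = (lvM N A b (-ε) fx * Matrix.diagonal x)ᵀ := by
    ext i j
    rw [Matrix.transpose_apply, Matrix.mul_diagonal, Matrix.mul_diagonal]
    by_cases h : i = j
    · subst h
      simpa [lvM] using hMfi i
    · have h' : ¬ j = i := fun hh => h hh.symm
      simp only [lvM, Matrix.of_apply, if_neg h, if_neg h']
      rw [hAij i j]
      ring
  have hdetkey : (lvM N A b ε x).det * ∏ i, fx i
      = (lvM N A b (-ε) fx).det * ∏ i, x i := by
    have := congrArg Matrix.det hmat
    rwa [Matrix.det_mul, Matrix.det_diagonal, Matrix.det_transpose, Matrix.det_mul,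
      Matrix.det_diagonal] at this
  -- differentiability
  have hMdiff : HasFDerivAt (lvM N A b ε)
      (LinearMap.toContinuousLinearMap (lvL N A ε)) x := by
    have heq : (lvM N A b ε)
        = fun y => lvM N A b ε 0 + (LinearMap.toContinuousLinearMap (lvL N A ε)) y := by
      funext y
      simpa using lvM_decomp N A b ε y
    rw [heq]
    exact ((LinearMap.toContinuousLinearMap (lvL N A ε)).hasFDerivAt).const_add _
  obtain ⟨u, hu⟩ := hM
  have hinv : HasFDerivAt (fun y => Ring.inverse (lvM N A b ε y))
      ((-(ContinuousLinearMap.mulLeftRight ℝ _ ↑u⁻¹ ↑u⁻¹)).comp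
        (LinearMap.toContinuousLinearMap (lvL N A ε))) x := by
    have h0 : HasFDerivAt (Ring.inverse)
        (-(ContinuousLinearMap.mulLeftRight ℝ _ ↑u⁻¹ ↑u⁻¹)) (lvM N A b ε x) := by
      rw [← hu]
      exact hasFDerivAt_ringInverse u
    exact h0.comp x hMdiff
  set C : Matrix (Fin N) (Fin N) ℝ := 1 + ε • Matrix.diagonal b with hC
  set Cclm : (Fin N → ℝ) →L[ℝ] (Fin N → ℝ)
    := LinearMap.toContinuousLinearMap (Matrix.mulVecLin C) with hCclm
  have hc : HasFDerivAt (fun y => mulVecL N (Ring.inverse (lvM N A b ε y)))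
      ((mulVecL N).comp ((-(ContinuousLinearMap.mulLeftRight ℝ _ ↑u⁻¹ ↑u⁻¹)).comp
        (LinearMap.toContinuousLinearMap (lvL N A ε)))) x :=
    (mulVecL N).hasFDerivAt.comp x hinv
  have hu' : HasFDerivAt (fun y => Cclm y) Cclm x := Cclm.hasFDerivAt
  have hF0 := hc.clm_apply hu'
  have hfun : (lvF N A b ε)
      = fun y => (mulVecL N (Ring.inverse (lvM N A b ε y))) (Cclm y) := by
    funext y
    show (lvM N A b ε y)⁻¹ *ᵥ ((1 + ε • Matrix.diagonal b) *ᵥ y) = _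
    rw [Matrix.nonsing_inv_eq_ringInverse]
    rfl
  set P : Matrix (Fin N) (Fin N) ℝ := (lvM N A b ε x)⁻¹ * lvM N A b (-ε) fx with hP
  set L₁ : (Fin N → ℝ) →L[ℝ] (Fin N → ℝ)
    := LinearMap.toContinuousLinearMap (Matrix.mulVecLin P) with hL₁
  -- the derivative equals L₁
  have hkey : ∀ v : Fin N → ℝ, C *ᵥ v - lvL N A ε v *ᵥ fx = lvM N A b (-ε) fx *ᵥ v := by
    intro v
    funext i
    rw [Pi.sub_apply, cVec_apply, lvL_mulVec N A ε hAii v fx i,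
      lvM_mulVec N A b (-ε) hAii fx v i]
    simp only [lvD]
    ring
  have hLeq : (mulVecL N (Ring.inverse (lvM N A b ε x))).comp Cclm
      + ((mulVecL N).comp ((-(ContinuousLinearMap.mulLeftRight ℝ _ ↑u⁻¹ ↑u⁻¹)).comp
        (LinearMap.toContinuousLinearMap (lvL N A ε)))).flip (Cclm x) = L₁ := by
    refine ContinuousLinearMap.ext fun v => ?_
    simp only [ContinuousLinearMap.add_apply, ContinuousLinearMap.flip_apply,
      ContinuousLinearMap.coe_comp', Function.comp_apply,
      LinearMap.coe_toContinuousLinearMap', ContinuousLinearMap.neg_apply,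
      ContinuousLinearMap.mulLeftRight_apply, mulVecL_apply, hL₁,
      Matrix.mulVecLin_apply]
    have huinv : (↑u⁻¹ : Matrix (Fin N) (Fin N) ℝ) = (lvM N A b ε x)⁻¹ := by
      rw [← hu, Matrix.coe_units_inv]
    rw [← Matrix.nonsing_inv_eq_ringInverse, huinv]
    have hCx : Cclm x = C *ᵥ x := by simp [hCclm]
    rw [hCx]
    have hCv : Cclm v = C *ᵥ v := by simp [hCclm]
    rw [hCv]
    have e1 : -((lvM N A b ε x)⁻¹ * lvL N A ε v * (lvM N A b ε x)⁻¹) *ᵥ (C *ᵥ x)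
        = -((lvM N A b ε x)⁻¹ *ᵥ (lvL N A ε v *ᵥ fx)) := by
      rw [hfxdef, lvF, ← hC]
      simp only [neg_mul, Matrix.neg_mulVec, Matrix.mulVec_mulVec, Matrix.mul_assoc]
    show (lvM N A b ε x)⁻¹ *ᵥ C *ᵥ v + (-((lvM N A b ε x)⁻¹ * lvL N A ε v * (lvM N A b ε x)⁻¹)) *ᵥ (C *ᵥ x) = P *ᵥ v
    rw [e1, hP, ← Matrix.mulVec_mulVec, ← hkey v, Matrix.mulVec_sub]
    abel
  rw [hLeq] at hF0
  have hF : HasFDerivAt (lvF N A b ε) L₁ x := by rw [hfun]; exact hF0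
  refine ⟨hF.differentiableAt, ?_⟩
  rw [hF.fderiv]
  have hdetL : L₁.det = P.det := by
    have : (L₁ : (Fin N → ℝ) →ₗ[ℝ] (Fin N → ℝ)) = Matrix.toLin' P := by
      rw [hL₁, LinearMap.coe_toContinuousLinearMap]
      refine LinearMap.ext fun v => ?_
      rw [Matrix.toLin'_apply, Matrix.mulVecLin_apply]
    rw [ContinuousLinearMap.det, this, LinearMap.det_toLin']
  rw [hdetL, hP, Matrix.det_mul, Matrix.det_nonsing_inv]
  have hdM : (lvM N A b ε x).det ≠ 0 := by
    simpa [isUnit_iff_ne_zero] using hdet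
  have hpx : (∏ i, x i) ≠ 0 := Finset.prod_ne_zero_iff.mpr fun i _ => hx i
  rw [Ring.inverse_eq_inv]
  field_simp
  linear_combination -hdetkey
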